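/- Let A ∈ ℂ^{n×n} be complex symmetric (A = Aᵀ) with Takagi factorization A = Q Σ Qᵀ, where Q is unitary and Σ is real nonnegative diagonal. Then QQᵀ is a closest unitary symmetric matrix to A in Frobenius norm: for every matrix U' ∈ ℂ^{n×n} with U'U'ᴴ = Iₙ and U' = U'ᵀ, one has ‖A − QQᵀ‖_F ≤ ‖A − U'‖_F. -/

import Mathlib

open Matrix

/-- The Frobenius norm of a complex square matrix. -/
noncomputable def frobNorm {n : ℕ} (M : Matrix (Fin n) (Fin n) ℂ) : ℝ :=
  Real.sqrt (∑ k, ∑ l, ‖M k l‖ ^ 2)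

open Finset in

noncomputable def Ssq {n : ℕ} (M : Matrix (Fin n) (Fin n) ℂ) : ℝ :=
  ∑ k, ∑ l, Complex.normSq (M k l)

lemma Ssq_eq_trace_re {n : ℕ} (M : Matrix (Fin n) (Fin n) ℂ) :
    Ssq M = ((Mᴴ * M).trace).re := by
  simp only [Matrix.trace, Matrix.diag, Matrix.mul_apply, Matrix.conjTranspose_apply,
    Complex.re_sum]
  rw [Finset.sum_comm]
  simp [Ssq, Complex.normSq_apply, Complex.mul_re]

lemma transpose_conjT {n : ℕ} (Q : Matrix (Fin n) (Fin n) ℂ) : Qᵀᴴ = Qᴴᵀ := by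
  ext i j; simp

lemma Ssq_conj_invar {n : ℕ} (Q M : Matrix (Fin n) (Fin n) ℂ) (hQ : Q * Qᴴ = 1) :
    Ssq (Q * M * Qᵀ) = Ssq M := by
  have hQ' : Qᴴ * Q = 1 := mul_eq_one_comm.mp hQ
  rw [Ssq_eq_trace_re, Ssq_eq_trace_re]
  congr 1
  have h1 : (Q * M * Qᵀ)ᴴ * (Q * M * Qᵀ) = (Qᵀ)ᴴ * (Mᴴ * M) * Qᵀ := by
    simp only [Matrix.conjTranspose_mul]
    calc Qᵀᴴ * (Mᴴ * Qᴴ) * (Q * M * Qᵀ)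
        = Qᵀᴴ * Mᴴ * (Qᴴ * Q) * M * Qᵀ := by noncomm_ring
      _ = Qᵀᴴ * (Mᴴ * M) * Qᵀ := by rw [hQ']; noncomm_ring
  rw [h1, Matrix.trace_mul_cycle]
  have h2 : Qᵀ * (Qᵀ)ᴴ = 1 := by
    rw [transpose_conjT]
    calc Qᵀ * (Qᴴ)ᵀ = (Qᴴ * Q)ᵀ := by rw [Matrix.transpose_mul]
      _ = 1 := by rw [hQ', Matrix.transpose_one]
  rw [← Matrix.mul_assoc, h2, Matrix.one_mul]

lemma key_ineq {n : ℕ} (σ : Fin n → ℝ) (hσ0 : ∀ k, 0 ≤ σ k)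
    (B : Matrix (Fin n) (Fin n) ℂ) (hB : B * Bᴴ = 1) :
    Ssq (Matrix.diagonal (fun k => (σ k : ℂ)) - 1)
      ≤ Ssq (Matrix.diagonal (fun k => (σ k : ℂ)) - B) := by
  have hrow : ∀ k, ∑ l, Complex.normSq (B k l) = 1 := by
    intro k
    have := congrFun (congrFun hB k) k
    simp only [Matrix.mul_apply, Matrix.conjTranspose_apply, Matrix.one_apply_eq] at this
    have : (∑ l, B k l * star (B k l)).re = (1 : ℂ).re := by rw [this]
    simpa [Complex.re_sum, Complex.mul_conj] using this
  unfold Ssq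
  apply Finset.sum_le_sum
  intro k _
  -- left inner sum
  have hL : ∑ l, Complex.normSq ((Matrix.diagonal (fun k => (σ k : ℂ)) - 1) k l)
      = (σ k - 1) ^ 2 := by
    rw [Finset.sum_eq_single k]
    · simp [Matrix.diagonal_apply_eq, Matrix.one_apply_eq, Complex.normSq_apply]; ring
    · intro l _ hl
      simp [Matrix.diagonal_apply, Matrix.one_apply, (Ne.symm hl : ¬ k = l)]
    · simp
  have hRe1 : (B k k).re ≤ 1 := by
    have h1 : Complex.normSq (B k k) ≤ 1 := by
      rw [← hrow k]
      exact Finset.single_le_sum (fun l _ => Complex.normSq_nonneg _) (Finset.mem_univ k)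
    have h2 : (B k k).re ≤ ‖B k k‖ := Complex.re_le_norm _
    nlinarith [Complex.sq_norm (B k k), norm_nonneg (B k k)]
  have hR : ∑ l, Complex.normSq ((Matrix.diagonal (fun k => (σ k : ℂ)) - B) k l)
      = 1 + (σ k) ^ 2 - 2 * σ k * (B k k).re := by
    have : ∀ l, Complex.normSq ((Matrix.diagonal (fun k => (σ k : ℂ)) - B) k l)
        = Complex.normSq (B k l)
          + (if l = k then (σ k) ^ 2 - 2 * σ k * (B k k).re else 0) := by
      intro l
      by_cases h : l = k
      · subst h
        simp [Matrix.diagonal_apply_eq, Complex.normSq_apply, Complex.sub_re, Complex.sub_im]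
        ring
      · have h' : ¬ (k = l) := fun hh => h hh.symm
        simp [Matrix.diagonal_apply, h, h', Complex.normSq_apply]
    rw [Finset.sum_congr rfl (fun l _ => this l), Finset.sum_add_distrib, hrow k,
      Finset.sum_ite_eq' Finset.univ k]
    simp; ring
  rw [hL, hR]
  nlinarith [mul_le_mul_of_nonneg_left hRe1 (hσ0 k)]

/-- If `A = Q * diagonal σ * Qᵀ` is a Takagi factorization of the symmetric matrix `A`,
then `Q * Qᵀ` is a closest unitary symmetric matrix to `A` in Frobenius norm. -/
theorem closest_unitary_symmetric {n : ℕ} (A Q : Matrix (Fin n) (Fin n) ℂ) (σ : Fin n → ℝ)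
    (hA : A = Aᵀ) (hQ : Q * Qᴴ = 1) (hσ0 : ∀ k, 0 ≤ σ k)
    (hTakagi : A = Q * Matrix.diagonal (fun k => (σ k : ℂ)) * Qᵀ) :
    ∀ U' : Matrix (Fin n) (Fin n) ℂ, U' * U'ᴴ = 1 → U' = U'ᵀ →
      frobNorm (A - Q * Qᵀ) ≤ frobNorm (A - U') := by
  intro U' hU' _
  have hQ' : Qᴴ * Q = 1 := mul_eq_one_comm.mp hQ
  set D : Matrix (Fin n) (Fin n) ℂ := Matrix.diagonal (fun k => (σ k : ℂ)) with hD
  set B : Matrix (Fin n) (Fin n) ℂ := Qᴴ * U' * Qᴴᵀ with hBdef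
  have hQT : Qᴴᵀ * Qᵀ = 1 := by
    rw [← Matrix.transpose_mul, hQ, Matrix.transpose_one]
  have hU'eq : Q * B * Qᵀ = U' := by
    rw [hBdef]
    calc Q * (Qᴴ * U' * Qᴴᵀ) * Qᵀ = (Q * Qᴴ) * U' * (Qᴴᵀ * Qᵀ) := by noncomm_ring
      _ = U' := by rw [hQ, hQT, Matrix.one_mul, Matrix.mul_one]
  have hBB : B * Bᴴ = 1 := by
    have hc : (Qᴴᵀ)ᴴ = Qᵀ := by
      rw [transpose_conjT Qᴴ, Matrix.conjTranspose_conjTranspose]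
    rw [hBdef]
    simp only [Matrix.conjTranspose_mul, hc]
    calc Qᴴ * U' * Qᴴᵀ * (Qᵀ * (U'ᴴ * Qᴴᴴ))
        = Qᴴ * U' * (Qᴴᵀ * Qᵀ) * U'ᴴ * Qᴴᴴ := by noncomm_ring
      _ = Qᴴ * (U' * U'ᴴ) * Q := by
          rw [hQT, Matrix.conjTranspose_conjTranspose]; noncomm_ring
      _ = 1 := by rw [hU', Matrix.mul_one, hQ']
  have hres1 : A - Q * Qᵀ = Q * (D - 1) * Qᵀ := by rw [hTakagi]; noncomm_ring
  have hres2 : A - U' = Q * (D - B) * Qᵀ := by rw [hTakagi, ← hU'eq]; noncomm_ring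
  have habs : ∀ M : Matrix (Fin n) (Fin n) ℂ,
      frobNorm M = Real.sqrt (Ssq M) := by
    intro M; unfold frobNorm Ssq; simp [Complex.sq_norm]
  rw [habs, habs, hres1, hres2, Ssq_conj_invar _ _ hQ, Ssq_conj_invar _ _ hQ]
  exact Real.sqrt_le_sqrt (key_ineq σ hσ0 B hBB)
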